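/- Let n be a positive integer, 0 ≤ p ≤ n, and let α, β, γ be complex numbers with Re(α) > 0, Re(β) > 0, Re(γ) ≥ 0 and Re(α+β+2(n-1)γ) < 1. Then the Dotsenko–Fateev integral satisfies the transformation S_{n,p}(α,β,γ) = S_{n,n-p}(1-α-β-2(n-1)γ, β, γ). -/

import Mathlib

open MeasureTheory Complex Finset

/-- The Dotsenko–Fateev integral `S_{n,p}(α,β,γ)`: the first `p` variables range over
`[0,1]` and the remaining `n-p` variables over `[1,∞)`; complex powers of positive real
numbers are taken with the principal branch. -/
noncomputable def dotsenkoFateevIntegral (n p : ℕ) (α β γ : ℂ) : ℂ :=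
  ∫ t : Fin n → ℝ in
      Set.univ.pi fun i : Fin n => if (i : ℕ) < p then Set.Icc (0:ℝ) 1 else Set.Ici (1:ℝ),
    (∏ i, ((t i : ℂ) ^ (α - 1) * ((|1 - t i| : ℝ) : ℂ) ^ (β - 1))) *
      ∏ i, ∏ j ∈ Finset.Ioi i, ((|t i - t j| : ℝ) : ℂ) ^ (2 * γ)

section AuxLemmas

lemma prod_Ioi_swap' {n : ℕ} {M : Type*} [CommMonoid M] (f : Fin n → Fin n → M) :
    ∏ i, ∏ j ∈ Ioi i, f i j = ∏ j, ∏ i ∈ Iio j, f i j := by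
  rw [prod_sigma', prod_sigma']
  refine prod_nbij' (fun x => ⟨x.2, x.1⟩) (fun x => ⟨x.2, x.1⟩) ?_ ?_ ?_ ?_ ?_ <;> simp

lemma prod_Ioi_perm' {n : ℕ} {M : Type*} [CommMonoid M] (f : Fin n → Fin n → M)
    (hf : ∀ i j, f i j = f j i) (σ : Equiv.Perm (Fin n)) :
    ∏ i, ∏ j ∈ Ioi i, f (σ i) (σ j) = ∏ i, ∏ j ∈ Ioi i, f i j := by
  rw [prod_sigma', prod_sigma']
  refine prod_nbij'
    (fun x => if σ x.1 < σ x.2 then ⟨σ x.1, σ x.2⟩ else ⟨σ x.2, σ x.1⟩)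
    (fun y => if σ⁻¹ y.1 < σ⁻¹ y.2 then ⟨σ⁻¹ y.1, σ⁻¹ y.2⟩ else ⟨σ⁻¹ y.2, σ⁻¹ y.1⟩)
    ?_ ?_ ?_ ?_ ?_
  · rintro ⟨a, b⟩ hab
    simp only [mem_sigma, mem_univ, mem_Ioi, true_and] at hab ⊢
    split_ifs with h
    · exact h
    · exact lt_of_le_of_ne (not_lt.1 h) (fun he => (σ.injective he ▸ hab).false)
  · rintro ⟨a, b⟩ hab
    simp only [mem_sigma, mem_univ, mem_Ioi, true_and] at hab ⊢
    split_ifs with h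
    · exact h
    · refine lt_of_le_of_ne (not_lt.1 h) (fun he => ?_)
      exact absurd (congrArg σ he) (by simp [hab.ne'])
  · rintro ⟨a, b⟩ hab
    simp only [mem_sigma, mem_univ, mem_Ioi, true_and] at hab
    by_cases h : σ a < σ b <;>
      simp [h, hab, hab.not_gt, Equiv.Perm.inv_def, Equiv.symm_apply_apply]
  · rintro ⟨a, b⟩ hab
    simp only [mem_sigma, mem_univ, mem_Ioi, true_and] at hab
    by_cases h : σ.symm a < σ.symm b <;>
      simp [h, hab, hab.not_gt, Equiv.Perm.inv_def, Equiv.apply_symm_apply]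
  · rintro ⟨a, b⟩ hab
    dsimp only
    split_ifs with h
    · rfl
    · exact hf _ _

lemma prod_pair_collect' {n : ℕ} {M : Type*} [CommMonoid M] (A : Fin n → M) :
    ∏ i, ∏ j ∈ Ioi i, (A i * A j) = ∏ i, A i ^ (n - 1) := by
  have h1 : ∏ i, ∏ j ∈ Ioi i, (A i * A j)
      = (∏ i, A i ^ (Ioi i).card) * ∏ i, ∏ j ∈ Ioi i, A j := by
    simp [prod_mul_distrib, prod_const]
  rw [h1, prod_Ioi_swap' (fun i j => A j)]
  simp only [prod_const, Fin.card_Ioi, Fin.card_Iio, ← prod_mul_distrib, ← pow_add]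
  exact prod_congr rfl fun i _ => by congr 1; omega

lemma ofReal_inv_cpow' {r : ℝ} (hr : 0 < r) (w : ℂ) :
    ((r⁻¹ : ℝ) : ℂ) ^ w = (r : ℂ) ^ (-w) := by
  have harg : (r : ℂ).arg ≠ Real.pi := by
    rw [arg_ofReal_of_nonneg hr.le]; exact Real.pi_ne_zero.symm
  rw [ofReal_inv, inv_cpow _ _ harg, ← cpow_neg]

lemma ofReal_mul_cpow' {a b : ℝ} (ha : 0 ≤ a) (hb : 0 ≤ b) (w : ℂ) :
    ((a * b : ℝ) : ℂ) ^ w = (a : ℂ) ^ w * (b : ℂ) ^ w := by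
  rw [ofReal_mul]; exact mul_cpow_ofReal_nonneg ha hb w

/-- The integrand of the Dotsenko–Fateev integral. -/
noncomputable def DFi (n : ℕ) (α β γ : ℂ) (t : Fin n → ℝ) : ℂ :=
  (∏ i, ((t i : ℂ) ^ (α - 1) * ((|1 - t i| : ℝ) : ℂ) ^ (β - 1))) *
    ∏ i, ∏ j ∈ Finset.Ioi i, ((|t i - t j| : ℝ) : ℂ) ^ (2 * γ)

lemma DFi_perm (n : ℕ) (α β γ : ℂ) (σ : Equiv.Perm (Fin n)) (t : Fin n → ℝ) :
    DFi n α β γ (fun i => t (σ i)) = DFi n α β γ t := by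
  unfold DFi
  congr 1
  · exact Equiv.prod_comp σ fun i => (t i : ℂ) ^ (α - 1) * ((|1 - t i| : ℝ) : ℂ) ^ (β - 1)
  · exact prod_Ioi_perm' (fun i j => ((|t i - t j| : ℝ) : ℂ) ^ (2 * γ))
      (fun i j => by rw [abs_sub_comm]) σ

lemma DFi_inv_smul (n : ℕ) (hn : 0 < n) (α β γ : ℂ) (x : Fin n → ℝ) (hx : ∀ i, 0 < x i) :
    (∏ i, ((x i) ^ 2)⁻¹) • DFi n (1 - α - β - 2 * ((n : ℂ) - 1) * γ) β γ (fun i => (x i)⁻¹)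
      = DFi n α β γ x := by
  set α' : ℂ := 1 - α - β - 2 * ((n : ℂ) - 1) * γ with hα'
  have hxne : ∀ i, (x i : ℂ) ≠ 0 := fun i => ofReal_ne_zero.2 (hx i).ne'
  set B : Fin n → ℂ := fun i => ((|1 - x i| : ℝ) : ℂ) ^ (β - 1) with hB
  set A : Fin n → ℂ := fun i => (x i : ℂ) ^ (-(2 * γ)) with hA
  set D : Fin n → Fin n → ℂ := fun i j => ((|x i - x j| : ℝ) : ℂ) ^ (2 * γ) with hD
  have h1 : ∀ i : Fin n, (((x i)⁻¹ : ℝ) : ℂ) ^ (α' - 1) *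
      ((|1 - (x i)⁻¹| : ℝ) : ℂ) ^ (β - 1)
      = (x i : ℂ) ^ (1 - α') * (B i * (x i : ℂ) ^ (1 - β)) := by
    intro i
    have e1 : (((x i)⁻¹ : ℝ) : ℂ) ^ (α' - 1) = (x i : ℂ) ^ (1 - α') := by
      rw [ofReal_inv_cpow' (hx i), neg_sub]
    have hne : x i ≠ 0 := (hx i).ne'
    have e2 : |1 - (x i)⁻¹| = |1 - x i| * (x i)⁻¹ := by
      rw [show (1 : ℝ) - (x i)⁻¹ = (x i - 1) * (x i)⁻¹ from by
        rw [sub_mul, mul_inv_cancel₀ hne, one_mul]]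
      rw [abs_mul, abs_of_pos (inv_pos.2 (hx i)), abs_sub_comm]
    rw [e1, e2, ofReal_mul_cpow' (abs_nonneg _) (inv_pos.2 (hx i)).le,
      ofReal_inv_cpow' (hx i), neg_sub]
  have h2 : ∀ i j : Fin n, ((|(x i)⁻¹ - (x j)⁻¹| : ℝ) : ℂ) ^ (2 * γ)
      = D i j * (A i * A j) := by
    intro i j
    have hnei : x i ≠ 0 := (hx i).ne'
    have hnej : x j ≠ 0 := (hx j).ne'
    have e3 : |(x i)⁻¹ - (x j)⁻¹| = |x i - x j| * ((x i)⁻¹ * (x j)⁻¹) := by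
      rw [show (x i)⁻¹ - (x j)⁻¹ = (x j - x i) * ((x i)⁻¹ * (x j)⁻¹) from by
        field_simp]
      rw [abs_mul, abs_of_pos (mul_pos (inv_pos.2 (hx i)) (inv_pos.2 (hx j))),
        abs_sub_comm]
    rw [e3, ofReal_mul_cpow' (abs_nonneg _)
        (mul_pos (inv_pos.2 (hx i)) (inv_pos.2 (hx j))).le,
      ofReal_mul_cpow' (inv_pos.2 (hx i)).le (inv_pos.2 (hx j)).le,
      ofReal_inv_cpow' (hx i), ofReal_inv_cpow' (hx j)]
  have hJ : ((∏ i, ((x i) ^ 2)⁻¹ : ℝ) : ℂ) = ∏ i, (x i : ℂ) ^ (-2 : ℂ) := by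
    push_cast
    refine prod_congr rfl fun i _ => ?_
    rw [show (-2 : ℂ) = -((2 : ℕ) : ℂ) from by norm_num, cpow_neg, cpow_natCast]
  have key : ∀ i : Fin n, (x i : ℂ) ^ (-2 : ℂ) *
      ((x i : ℂ) ^ (1 - α') * (B i * (x i : ℂ) ^ (1 - β))) * A i ^ (n - 1)
      = (x i : ℂ) ^ (α - 1) * B i := by
    intro i
    have hpow : A i ^ (n - 1) = (x i : ℂ) ^ (((n - 1 : ℕ) : ℂ) * (-(2 * γ))) := by
      rw [hA, cpow_nat_mul]
    rw [hpow]
    have hsum : (x i : ℂ) ^ (-2 : ℂ) * (x i : ℂ) ^ (1 - α') * (x i : ℂ) ^ (1 - β) *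
        (x i : ℂ) ^ (((n - 1 : ℕ) : ℂ) * (-(2 * γ))) = (x i : ℂ) ^ (α - 1) := by
      rw [← cpow_add _ _ (hxne i), ← cpow_add _ _ (hxne i), ← cpow_add _ _ (hxne i)]
      congr 1
      have : ((n - 1 : ℕ) : ℂ) = (n : ℂ) - 1 := by
        push_cast [Nat.cast_sub hn]; ring
      rw [this, hα']; ring
    calc (x i : ℂ) ^ (-2 : ℂ) * ((x i : ℂ) ^ (1 - α') * (B i * (x i : ℂ) ^ (1 - β))) *
          (x i : ℂ) ^ (((n - 1 : ℕ) : ℂ) * (-(2 * γ)))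
        = ((x i : ℂ) ^ (-2 : ℂ) * (x i : ℂ) ^ (1 - α') * (x i : ℂ) ^ (1 - β) *
          (x i : ℂ) ^ (((n - 1 : ℕ) : ℂ) * (-(2 * γ)))) * B i := by ring
      _ = (x i : ℂ) ^ (α - 1) * B i := by rw [hsum]
  unfold DFi
  rw [real_smul, hJ]
  have r1 : (∏ i, (((x i)⁻¹ : ℝ) : ℂ) ^ (α' - 1) *
      ((|1 - ((fun i => (x i)⁻¹) i)| : ℝ) : ℂ) ^ (β - 1))
      = ∏ i, (x i : ℂ) ^ (1 - α') * (B i * (x i : ℂ) ^ (1 - β)) :=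
    prod_congr rfl fun i _ => h1 i
  have r2 : (∏ i, ∏ j ∈ Finset.Ioi i, ((|(x i)⁻¹ - (x j)⁻¹| : ℝ) : ℂ) ^ (2 * γ))
      = (∏ i, ∏ j ∈ Finset.Ioi i, D i j) * ∏ i, A i ^ (n - 1) := by
    rw [← prod_pair_collect' A, ← prod_mul_distrib]
    refine prod_congr rfl fun i _ => ?_
    rw [← prod_mul_distrib]
    exact prod_congr rfl fun j _ => h2 i j
  simp only []
  rw [r1, r2]
  have merge : (∏ i, (x i : ℂ) ^ (-2 : ℂ)) *
      (∏ i, (x i : ℂ) ^ (1 - α') * (B i * (x i : ℂ) ^ (1 - β))) *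
      (∏ i, A i ^ (n - 1))
      = ∏ i, (x i : ℂ) ^ (-2 : ℂ) *
          ((x i : ℂ) ^ (1 - α') * (B i * (x i : ℂ) ^ (1 - β))) * A i ^ (n - 1) := by
    rw [← prod_mul_distrib, ← prod_mul_distrib]
  calc (∏ i, (x i : ℂ) ^ (-2 : ℂ)) *
        ((∏ i, (x i : ℂ) ^ (1 - α') * (B i * (x i : ℂ) ^ (1 - β))) *
          ((∏ i, ∏ j ∈ Finset.Ioi i, D i j) * ∏ i, A i ^ (n - 1)))
      = ((∏ i, (x i : ℂ) ^ (-2 : ℂ)) *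
          (∏ i, (x i : ℂ) ^ (1 - α') * (B i * (x i : ℂ) ^ (1 - β))) *
          (∏ i, A i ^ (n - 1))) * (∏ i, ∏ j ∈ Finset.Ioi i, D i j) := by ring
    _ = (∏ i, (x i : ℂ) ^ (α - 1) * B i) * ∏ i, ∏ j ∈ Finset.Ioi i, D i j := by
        rw [merge]; exact congrArg (· * _) (prod_congr rfl fun i _ => key i)

/-- block swap permutation -/
def blockSwap (n p : ℕ) (hp : p ≤ n) : Equiv.Perm (Fin n) where
  toFun i := if h : (i : ℕ) < p then ⟨(i : ℕ) + (n - p), by omega⟩ else ⟨(i : ℕ) - p, by omega⟩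
  invFun i := if h : (i : ℕ) < n - p then ⟨(i : ℕ) + p, by omega⟩
    else ⟨(i : ℕ) - (n - p), by omega⟩
  left_inv i := by
    by_cases h : (i : ℕ) < p
    · simp only [dif_pos h]
      rw [dif_neg (by omega)]
      exact Fin.ext (by simp)
    · simp only [dif_neg h]
      rw [dif_pos (by omega)]
      exact Fin.ext (by simp <;> omega)
  right_inv i := by
    by_cases h : (i : ℕ) < n - p
    · simp only [dif_pos h]
      rw [dif_neg (by omega)]
      exact Fin.ext (by simp)
    · simp only [dif_neg h]
      rw [dif_pos (by omega)]
      exact Fin.ext (by simp <;> omega)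

lemma blockSwap_lt (n p : ℕ) (hp : p ≤ n) (i : Fin n) :
    ((blockSwap n p hp i : Fin n) : ℕ) < n - p ↔ p ≤ (i : ℕ) := by
  simp only [blockSwap, Equiv.coe_fn_mk]
  by_cases h : (i : ℕ) < p
  · rw [dif_pos h]; simp; omega
  · rw [dif_neg h]; simp; omega

lemma det_pi_smul_proj {n : ℕ} (c : Fin n → ℝ) :
    (ContinuousLinearMap.pi fun i =>
      c i • ContinuousLinearMap.proj (R := ℝ) (φ := fun _ : Fin n => ℝ) i).det = ∏ i, c i := by
  have h : LinearMap.toMatrix (Pi.basisFun ℝ (Fin n)) (Pi.basisFun ℝ (Fin n))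
      (ContinuousLinearMap.pi fun i =>
        c i • ContinuousLinearMap.proj (R := ℝ) (φ := fun _ : Fin n => ℝ) i) =
      Matrix.diagonal c := by
    ext i j
    simp [LinearMap.toMatrix_apply, Matrix.diagonal, Pi.single_apply, eq_comm]
  rw [ContinuousLinearMap.det, ← LinearMap.det_toMatrix (Pi.basisFun ℝ (Fin n)), h,
    Matrix.det_diagonal]

lemma image_inv_pi {n : ℕ} (T : Fin n → Set ℝ) :
    (fun x : Fin n → ℝ => fun i => (x i)⁻¹) '' Set.univ.pi T =
      Set.univ.pi fun i => Inv.inv '' T i := by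
  ext y
  constructor
  · rintro ⟨x, hx, rfl⟩ i _
    exact ⟨x i, hx i (Set.mem_univ i), rfl⟩
  · intro hy
    refine ⟨fun i => (y i)⁻¹, fun i _ => ?_, ?_⟩
    · obtain ⟨z, hz, hzy⟩ := hy i (Set.mem_univ i)
      simp only [← hzy, inv_inv]; exact hz
    · funext i; exact inv_inv (y i)

lemma image_inv_Ioc : Inv.inv '' Set.Ioc (0:ℝ) 1 = Set.Ici 1 := by
  ext y
  constructor
  · rintro ⟨x, ⟨hx0, hx1⟩, rfl⟩
    exact one_le_inv_iff₀.2 ⟨hx0, hx1⟩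
  · intro hy
    exact ⟨y⁻¹, ⟨inv_pos.2 (lt_of_lt_of_le one_pos hy), inv_le_one_of_one_le₀ hy⟩, inv_inv y⟩

lemma image_inv_Ici : Inv.inv '' Set.Ici (1:ℝ) = Set.Ioc 0 1 := by
  ext y
  constructor
  · rintro ⟨x, hx, rfl⟩
    exact ⟨inv_pos.2 (lt_of_lt_of_le one_pos hx), inv_le_one_of_one_le₀ hx⟩
  · rintro ⟨hy0, hy1⟩
    exact ⟨y⁻¹, one_le_inv_iff₀.2 ⟨hy0, hy1⟩, inv_inv y⟩

lemma pi_ae_congr {n : ℕ} (S T : Fin n → Set ℝ) (h : ∀ i, S i =ᵐ[volume] T i) :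
    Set.univ.pi S =ᵐ[(volume : Measure (Fin n → ℝ))] Set.univ.pi T := by
  have key : ∀ (U V : Fin n → Set ℝ), (∀ i, volume (U i \ V i) = 0) →
      (volume : Measure (Fin n → ℝ)) (Set.univ.pi U \ Set.univ.pi V) = 0 := by
    intro U V hUV
    have hsub : Set.univ.pi U \ Set.univ.pi V ⊆
        ⋃ i, (fun x : Fin n → ℝ => x i) ⁻¹' (U i \ V i) := by
      rintro x ⟨hxU, hxV⟩
      simp only [Set.mem_pi, Set.mem_univ, forall_true_left] at hxV
      push_neg at hxV
      obtain ⟨i, hi⟩ := hxV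
      exact Set.mem_iUnion.2 ⟨i, hxU i (Set.mem_univ i), hi⟩
    refine measure_mono_null hsub (measure_iUnion_null fun i => ?_)
    have : (fun x : Fin n → ℝ => x i) ⁻¹' (U i \ V i) =
        Set.univ.pi fun j => if j = i then U i \ V i else Set.univ := by
      ext x
      simp only [Set.mem_preimage, Set.mem_pi, Set.mem_univ, forall_true_left]
      constructor
      · intro hx j; split <;> simp_all
      · intro hx; have := hx i; simp_all
    rw [this, volume_pi_pi]
    exact Finset.prod_eq_zero (Finset.mem_univ i) (by simp [hUV i])
  have h1 : ∀ i, volume (S i \ T i) = 0 := fun i => (ae_le_set.1 (h i).le)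
  have h2 : ∀ i, volume (T i \ S i) = 0 := fun i => (ae_le_set.1 (h i).symm.le)
  exact (ae_le_set.2 (key S T h1)).antisymm (ae_le_set.2 (key T S h2))

end AuxLemmas

theorem dotsenko_fateev_transformation (n p : ℕ) (hn : 0 < n) (hp : p ≤ n)
    (α β γ : ℂ) (hα : 0 < α.re) (hβ : 0 < β.re) (hγ : 0 ≤ γ.re)
    (h1 : (α + β + 2 * ((n : ℂ) - 1) * γ).re < 1) :
    dotsenkoFateevIntegral n p α β γ =
      dotsenkoFateevIntegral n (n - p) (1 - α - β - 2 * ((n : ℂ) - 1) * γ) β γ := by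
  classical
  set α' : ℂ := 1 - α - β - 2 * ((n : ℂ) - 1) * γ with hα'
  set Sp : Fin n → Set ℝ := fun i => if (i : ℕ) < p then Set.Icc 0 1 else Set.Ici 1 with hSp
  set T : Fin n → Set ℝ := fun i => if (i : ℕ) < p then Set.Ioc 0 1 else Set.Ici 1 with hT
  set T' : Fin n → Set ℝ := fun i => if (i : ℕ) < p then Set.Ici 1 else Set.Ioc 0 1 with hT'
  set St : Fin n → Set ℝ := fun i => if (i : ℕ) < n - p then Set.Icc 0 1 else Set.Ici 1 with hSt
  set U : Fin n → Set ℝ := fun i => if (i : ℕ) < n - p then Set.Ioc 0 1 else Set.Ici 1 with hU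
  have hLdef : dotsenkoFateevIntegral n p α β γ
      = ∫ t in Set.univ.pi Sp, DFi n α β γ t := rfl
  have hRdef : dotsenkoFateevIntegral n (n - p) α' β γ
      = ∫ t in Set.univ.pi St, DFi n α' β γ t := rfl
  -- step 1 : replace `Icc` by `Ioc` (a.e. equal)
  have step1 : ∫ t in Set.univ.pi Sp, DFi n α β γ t
      = ∫ t in Set.univ.pi T, DFi n α β γ t := by
    refine setIntegral_congr_set (pi_ae_congr _ _ fun i => ?_)
    by_cases h : (i : ℕ) < p
    · simp only [hSp, hT, if_pos h]; exact Ioc_ae_eq_Icc.symm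
    · simp only [hSp, hT, if_neg h]
      exact Filter.EventuallyEq.rfl
  have step4 : ∫ t in Set.univ.pi St, DFi n α' β γ t
      = ∫ t in Set.univ.pi U, DFi n α' β γ t := by
    refine setIntegral_congr_set (pi_ae_congr _ _ fun i => ?_)
    by_cases h : (i : ℕ) < n - p
    · simp only [hSt, hU, if_pos h]; exact Ioc_ae_eq_Icc.symm
    · simp only [hSt, hU, if_neg h]
      exact Filter.EventuallyEq.rfl
  -- change of variables
  have hTmeas : MeasurableSet (Set.univ.pi T) := by
    refine MeasurableSet.univ_pi fun i => ?_
    simp only [hT]; split_ifs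
    exacts [measurableSet_Ioc, measurableSet_Ici]
  have hTpos : ∀ x ∈ Set.univ.pi T, ∀ i, 0 < x i := by
    intro x hx i
    have := hx i (Set.mem_univ i)
    simp only [hT] at this
    split_ifs at this with h
    · exact this.1
    · exact lt_of_lt_of_le one_pos this
  set f : (Fin n → ℝ) → (Fin n → ℝ) := fun x i => (x i)⁻¹ with hfdef
  set f' : (Fin n → ℝ) → (Fin n → ℝ) →L[ℝ] (Fin n → ℝ) := fun x =>
    ContinuousLinearMap.pi fun i =>
      (-((x i) ^ 2)⁻¹) • ContinuousLinearMap.proj i with hf'def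
  have hderiv : ∀ x ∈ Set.univ.pi T, HasFDerivWithinAt f (f' x) (Set.univ.pi T) x := by
    intro x hx
    refine (hasFDerivAt_pi.2 fun i => ?_).hasFDerivWithinAt
    exact (hasDerivAt_inv (hTpos x hx i).ne').comp_hasFDerivAt x (hasFDerivAt_apply i x)
  have hinj : Set.InjOn f (Set.univ.pi T) := fun a _ b _ h =>
    funext fun i => inv_injective (congrFun h i)
  have himg : f '' Set.univ.pi T = Set.univ.pi T' := by
    rw [hfdef, image_inv_pi]
    refine congrArg Set.univ.pi (funext fun i => ?_)
    simp only [hT, hT']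
    split_ifs with h
    · exact image_inv_Ioc
    · exact image_inv_Ici
  have cov : ∫ x in Set.univ.pi T', DFi n α' β γ x
      = ∫ x in Set.univ.pi T, DFi n α β γ x := by
    rw [← himg,
      integral_image_eq_integral_abs_det_fderiv_smul volume hTmeas hderiv hinj (DFi n α' β γ)]
    refine setIntegral_congr_fun hTmeas fun x hx => ?_
    have hdet : |(f' x).det| = ∏ i, ((x i) ^ 2)⁻¹ := by
      rw [hf'def, det_pi_smul_proj, Finset.abs_prod]
      refine prod_congr rfl fun i _ => ?_
      rw [abs_neg]
      exact abs_of_nonneg (inv_nonneg.2 (sq_nonneg _))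
    rw [hdet]
    exact DFi_inv_smul n hn α β γ x (hTpos x hx)
  -- permutation step
  set σ : Equiv.Perm (Fin n) := blockSwap n p hp with hσdef
  have hσ : ∀ j : Fin n, U (σ j) = T' j := by
    intro j
    have hbl := blockSwap_lt n p hp j
    simp only [hU, hT']
    by_cases h : (j : ℕ) < p
    · rw [if_pos h, if_neg (by rw [hσdef, hbl]; omega)]
    · rw [if_neg h, if_pos (by rw [hσdef, hbl]; omega)]
  have permEq : ∫ x in Set.univ.pi U, DFi n α' β γ x
      = ∫ x in Set.univ.pi T', DFi n α' β γ x := by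
    have mp := volume_measurePreserving_piCongrLeft (fun _ : Fin n => ℝ) σ
    have hint := mp.setIntegral_preimage_emb
      (MeasurableEquiv.measurableEmbedding _) (DFi n α' β γ) (Set.univ.pi U)
    have hpre : (⇑(MeasurableEquiv.piCongrLeft (fun _ : Fin n => ℝ) σ)) ⁻¹' (Set.univ.pi U)
        = Set.univ.pi T' := by
      rw [MeasurableEquiv.coe_piCongrLeft, Equiv.piCongrLeft_preimage_univ_pi]
      exact congrArg Set.univ.pi (funext hσ)
    have happ : ∀ (t : Fin n → ℝ),
        DFi n α' β γ ((MeasurableEquiv.piCongrLeft (fun _ : Fin n => ℝ) σ) t)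
          = DFi n α' β γ t := by
      intro t
      have hcoord : ∀ i : Fin n,
          ((MeasurableEquiv.piCongrLeft (fun _ : Fin n => ℝ) σ) t) (σ i) = t i := by
        intro i
        rw [MeasurableEquiv.coe_piCongrLeft]
        exact Equiv.piCongrLeft_apply_apply (fun _ : Fin n => ℝ) σ t i
      calc DFi n α' β γ ((MeasurableEquiv.piCongrLeft (fun _ : Fin n => ℝ) σ) t)
          = DFi n α' β γ (fun i =>
              ((MeasurableEquiv.piCongrLeft (fun _ : Fin n => ℝ) σ) t) (σ i)) :=
            (DFi_perm n α' β γ σ _).symm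
        _ = DFi n α' β γ t := by
            exact congrArg (DFi n α' β γ) (funext hcoord)
    rw [← hint, hpre]
    simp only [happ]
  rw [hLdef, hRdef, step1, ← cov, step4, permEq]
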